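/- Let β, γ ≥ 0 and let g : (0,∞) → ℝ satisfy g(s) ≤ β·s for all s ∈ (0,1] and g(s) ≤ γ − s for all s ≥ 1. Then for all positive reals a, b: ( b + a·g(b/a) ) + ( a + b·g(a/b) ) ≤ (1 + β + γ)·min(a, b). -/
import Mathlib

/-- Pairing bound from Lemma 4.3: if g(s) ≤ β·s on (0,1] and g(s) ≤ γ − s on
[1,∞), then (b + a·g(b/a)) + (a + b·g(a/b)) ≤ (1 + β + γ)·min(a,b) for all
positive a, b. -/
theorem stmt_15 (β γ : ℝ) (hβ : 0 ≤ β) (hγ : 0 ≤ γ) (g : ℝ → ℝ)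
    (hg1 : ∀ s : ℝ, 0 < s → s ≤ 1 → g s ≤ β * s)
    (hg2 : ∀ s : ℝ, 1 ≤ s → g s ≤ γ - s)
    (a b : ℝ) (ha : 0 < a) (hb : 0 < b) :
    (b + a * g (b / a)) + (a + b * g (a / b)) ≤ (1 + β + γ) * min a b := by
  rcases le_total b a with h | h
  · have hba : b / a ≤ 1 := (div_le_one ha).2 h
    have hab : 1 ≤ a / b := (one_le_div hb).2 h
    have h1 : a * g (b / a) ≤ β * b := by
      have := hg1 (b / a) (div_pos hb ha) hba
      calc a * g (b / a) ≤ a * (β * (b / a)) := by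
            exact mul_le_mul_of_nonneg_left this ha.le
        _ = β * b := by field_simp
    have h2 : b * g (a / b) ≤ γ * b - a := by
      have := hg2 (a / b) hab
      calc b * g (a / b) ≤ b * (γ - a / b) := by
            exact mul_le_mul_of_nonneg_left this hb.le
        _ = γ * b - a := by field_simp
    have : min a b = b := min_eq_right h
    rw [this]; nlinarith
  · have hba : 1 ≤ b / a := (one_le_div ha).2 h
    have hab : a / b ≤ 1 := (div_le_one hb).2 h
    have h1 : a * g (b / a) ≤ γ * a - b := by
      have := hg2 (b / a) hba
      calc a * g (b / a) ≤ a * (γ - b / a) := by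
            exact mul_le_mul_of_nonneg_left this ha.le
        _ = γ * a - b := by field_simp
    have h2 : b * g (a / b) ≤ β * a := by
      have := hg1 (a / b) (div_pos ha hb) hab
      calc b * g (a / b) ≤ b * (β * (a / b)) := by
            exact mul_le_mul_of_nonneg_left this hb.le
        _ = β * a := by field_simp
    have : min a b = a := min_eq_left h
    rw [this]; nlinarith
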